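/- arXiv:2306.11815 — 6 statements merged into one kernel-verified Lean document; each statement's English description precedes it below -/
import Mathlib

section
/- Let p be a prime and a an integer with p not dividing a. Then the p-adic valuation of a^(p-1) - 1 equals the p-adic valuation of a^(p^m - 1) - 1 for every positive integer m. -/
theorem stmt0 (p : ℕ) (hp : p.Prime) (a : ℤ) (ha : ¬ (p : ℤ) ∣ a)
    (m : ℕ) (hm : 1 ≤ m) :
    padicValInt p (a ^ (p - 1) - 1) = padicValInt p (a ^ (p ^ m - 1) - 1) := by
  haveI : Fact p.Prime := ⟨hp⟩
  set s : ℕ := ∑ i ∈ Finset.range m, p ^ i with hs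
  have h1 : 1 ≤ p := hp.one_lt.le
  have h2 : 1 ≤ p ^ m := Nat.one_le_pow _ _ hp.pos
  have hps : (p - 1) * s = p ^ m - 1 := by
    have hz : ((p - 1) * s : ℤ) = ((p ^ m : ℕ) : ℤ) - 1 := by
      rw [hs]; push_cast
      rw [mul_comm]
      exact geom_sum_mul _ _
    have : (((p - 1) * s : ℕ) : ℤ) = ((p ^ m - 1 : ℕ) : ℤ) := by
      rw [Nat.cast_mul, Nat.cast_sub h1, Nat.cast_sub h2]
      push_cast at hz ⊢
      linarith
    exact_mod_cast this
  have hpow : a ^ (p ^ m - 1) = (a ^ (p - 1)) ^ s := by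
    rw [← pow_mul, hps]
  by_cases hb : a ^ (p - 1) = 1
  · rw [hpow, hb, one_pow]
  · set b := a ^ (p - 1) with hbdef
    set c : ℤ := ∑ i ∈ Finset.range s, b ^ i with hc
    have hsmod : ((s : ℕ) : ZMod p) = 1 := by
      obtain ⟨k, rfl⟩ : ∃ k, m = k + 1 := ⟨m - 1, by omega⟩
      rw [hs]
      push_cast
      rw [Finset.sum_range_succ']
      simp [ZMod.natCast_self, zero_pow]
    have hbmod : ((b : ℤ) : ZMod p) = 1 := by
      rw [hbdef]
      push_cast
      exact ZMod.pow_card_sub_one_eq_one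
        (by rwa [Ne, ZMod.intCast_zmod_eq_zero_iff_dvd])
    have hcmod : ((c : ℤ) : ZMod p) = 1 := by
      rw [hc]
      push_cast
      rw [Finset.sum_congr rfl (fun i _ => by rw [hbmod, one_pow])]
      simpa using hsmod
    have hcne : ¬ (p : ℤ) ∣ c := by
      intro h
      have := (ZMod.intCast_zmod_eq_zero_iff_dvd c p).2 h
      rw [hcmod] at this
      exact one_ne_zero this
    have hfac : b ^ s - 1 = (b - 1) * c := by
      rw [mul_comm, hc]
      exact (geom_sum_mul b s).symm
    have hbne : b - 1 ≠ 0 := sub_ne_zero.2 hb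
    have hcne0 : c ≠ 0 := fun h => hcne (h ▸ dvd_zero _)
    rw [hpow, hfac, padicValInt.mul hbne hcne0,
      padicValInt.eq_zero_of_not_dvd hcne, add_zero]
end

section
/- Let p be a prime and a an integer with a^p ≢ a (mod p^2). Then for every positive integer n, a^(p^n) ≢ a (mod p^2). -/
theorem stmt2 (p : ℕ) (hp : p.Prime) (a : ℤ) (ha : ¬ ((p : ℤ) ^ 2 ∣ a ^ p - a))
    (n : ℕ) (hn : 1 ≤ n) :
    ¬ ((p : ℤ) ^ 2 ∣ a ^ (p ^ n) - a) := by
  haveI := Fact.mk hp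
  obtain ⟨m, rfl⟩ := Nat.exists_eq_add_of_le hn
  intro h
  apply ha
  set b : ℤ := a ^ p ^ m with hb
  have h1 : (p : ℤ) ∣ b - a := by
    have hz : ((b - a : ℤ) : ZMod p) = 0 := by
      push_cast [hb]
      rw [ZMod.pow_card_pow]
      ring
    exact (ZMod.intCast_zmod_eq_zero_iff_dvd _ _).mp hz
  have h2 : ((p : ℤ)) ^ 2 ∣ b ^ p - a ^ p := by
    have := dvd_sub_pow_of_dvd_sub h1 1
    simpa using this
  have h3 : a ^ p ^ (1 + m) = b ^ p := by
    rw [hb, ← pow_mul, ← pow_succ, Nat.add_comm]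
  have : a ^ p - a = (a ^ p ^ (1 + m) - a) - (b ^ p - a ^ p) := by
    rw [h3]; ring
  rw [this]
  exact dvd_sub h h2
end

section
/- Let p be a prime and a an integer with p ∣ a and p^2 ∤ a. Define f(x) = x^p - a and let f^n denote the n-fold composition of f with itself. Then for every n ≥ 1, the p-adic valuation of f^n(0) equals the p-adic valuation of a, i.e. v_p(f^n(0)) = 1. -/
lemma val_one_of_dvd {p : ℕ} (hp : p.Prime) {m : ℤ} (h1 : (p:ℤ) ∣ m)
    (h2 : ¬ (p:ℤ)^2 ∣ m) : padicValInt p m = 1 := by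
  haveI : Fact p.Prime := ⟨hp⟩
  have hm : m ≠ 0 := by rintro rfl; exact h2 (dvd_zero _)
  have hle : 1 ≤ padicValInt p m := by
    have := (padicValInt_dvd_iff (p := p) 1 m).mp (by simpa using h1)
    tauto
  have hlt : padicValInt p m < 2 := by
    by_contra h
    exact h2 ((padicValInt_dvd_iff (p := p) 2 m).mpr (Or.inr (le_of_not_gt h)))
  omega

theorem stmt3 (p : ℕ) (hp : p.Prime) (a : ℤ) (hpa : (p : ℤ) ∣ a)
    (hp2a : ¬ ((p : ℤ) ^ 2 ∣ a))
    (f : ℤ → ℤ) (hf : ∀ x, f x = x ^ p - a)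
    (n : ℕ) (hn : 1 ≤ n) :
    padicValInt p (f^[n] 0) = 1 := by
  have key : ∀ n, 1 ≤ n → (p:ℤ) ∣ f^[n] 0 ∧ ¬ (p:ℤ)^2 ∣ f^[n] 0 := by
    intro n hn
    induction n with
    | zero => omega
    | succ k ih =>
      rcases Nat.eq_or_lt_of_le hn with h | h
      · simp only [← h, Function.iterate_one, hf]
        simp only [zero_pow hp.ne_zero, zero_sub]
        exact ⟨(dvd_neg).mpr hpa, fun hc => hp2a ((dvd_neg).mp hc)⟩
      · obtain ⟨hd, hnd⟩ := ih (by omega)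
        rw [Function.iterate_succ_apply', hf]
        have hpow : (p:ℤ)^2 ∣ (f^[k] 0) ^ p := by
          calc (p:ℤ)^2 ∣ (f^[k] 0)^2 := pow_dvd_pow_of_dvd hd 2
          _ ∣ (f^[k] 0) ^ p := pow_dvd_pow _ hp.two_le
        constructor
        · exact dvd_sub (hd.trans (dvd_pow_self _ hp.ne_zero)) hpa
        · intro hc
          exact hp2a (by simpa using (dvd_sub hpow hc))
  obtain ⟨h1, h2⟩ := key n hn
  exact val_one_of_dvd hp h1 h2
end

section
/- Let p be a prime, a an integer, and f(x) = x^p - a. If p ∣ a and p^2 ∤ a, then for every n ≥ 1 the n-fold composition f^n(x) is Eisenstein at p (every non-leading coefficient is divisible by p and the constant term is not divisible by p^2), hence f^n is irreducible over ℚ. -/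
open Polynomial

theorem stmt6 (p : ℕ) (hp : p.Prime) (a : ℤ) (hpa : (p : ℤ) ∣ a)
    (hp2a : ¬ ((p : ℤ) ^ 2 ∣ a))
    (f : ℤ[X]) (hf : f = X ^ p - C a)
    (fn : ℕ → ℤ[X]) (hfn1 : fn 1 = f)
    (hfns : ∀ n, 1 ≤ n → fn (n + 1) = (fn n).comp f)
    (n : ℕ) (hn : 1 ≤ n) :
    (fn n).IsEisensteinAt (Ideal.span {(p : ℤ)}) ∧
      Irreducible ((fn n).map (Int.castRingHom ℚ)) := by
  haveI : Fact p.Prime := ⟨hp⟩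
  have hp0 : p ≠ 0 := hp.ne_zero
  set φ : ℤ →+* ZMod p := Int.castRingHom (ZMod p) with hφ
  have hφa : φ a = 0 := (ZMod.intCast_zmod_eq_zero_iff_dvd a p).mpr hpa
  have hfm : f.Monic := by rw [hf]; exact monic_X_pow_sub_C a hp0
  have hfd : f.natDegree = p := by rw [hf]; exact natDegree_X_pow_sub_C
  have hfmap : f.map φ = X ^ p := by
    rw [hf]; simp [Polynomial.map_sub, Polynomial.map_pow]
    simpa using congrArg (Polynomial.C (R := ZMod p)) ((ZMod.intCast_zmod_eq_zero_iff_dvd a p).mpr hpa)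
  have key : ∀ m, 1 ≤ m → (fn m).Monic ∧ (fn m).natDegree = p ^ m ∧
      (fn m).map φ = X ^ (p ^ m) ∧ ¬ ((p : ℤ) ^ 2 ∣ (fn m).coeff 0) := by
    intro m hm
    induction m, hm using Nat.le_induction with
    | base =>
      refine ⟨by rw [hfn1]; exact hfm, by rw [hfn1, hfd, pow_one], ?_, ?_⟩
      · rw [hfn1, hfmap, pow_one]
      · rw [hfn1, hf]
        simpa [coeff_X_pow, Ne.symm hp0] using hp2a
    | succ m hm ih =>
      obtain ⟨hmon, hdeg, hmap, hc0⟩ := ih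
      have hrec := hfns m hm
      have hmon' : (fn (m + 1)).Monic := by
        rw [hrec]; exact hmon.comp hfm (by rw [hfd]; exact hp0)
      have hdeg' : (fn (m + 1)).natDegree = p ^ (m + 1) := by
        rw [hrec, natDegree_comp, hdeg, hfd, pow_succ]
      have hmap' : (fn (m + 1)).map φ = X ^ (p ^ (m + 1)) := by
        rw [hrec, Polynomial.map_comp, hmap, hfmap]
        simp [pow_comp, ← pow_mul, pow_succ, mul_comm]
      refine ⟨hmon', hdeg', hmap', ?_⟩
      have hc1 : (p : ℤ) ∣ (fn m).coeff 1 := by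
        have h1 := congrArg (fun q => q.coeff 1) hmap
        simp only [coeff_map, coeff_X_pow] at h1
        have hne : (1 : ℕ) ≠ p ^ m := by
          have h2 : 2 ≤ p ^ m :=
            le_trans hp.two_le (Nat.le_self_pow (by omega) p)
          omega
        rw [if_neg hne] at h1
        exact (ZMod.intCast_zmod_eq_zero_iff_dvd _ p).mp h1
      have heval : (fn (m+1)).coeff 0 = (-a) * (fn m).divX.eval (-a) + (fn m).coeff 0 := by
        rw [hrec, coeff_zero_eq_eval_zero, eval_comp]
        have hf0 : f.eval 0 = -a := by rw [hf]; simp [hp0]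
        rw [hf0]
        conv_lhs => rw [← X_mul_divX_add (fn m)]
        simp [mul_comm]
      have hdvd : (p : ℤ) ∣ (fn m).divX.eval (-a) := by
        have h0 : (p : ℤ) ∣ (fn m).divX.coeff 0 := by simpa [coeff_divX] using hc1
        have : (fn m).divX.eval (-a) =
            (-a) * (fn m).divX.divX.eval (-a) + (fn m).divX.coeff 0 := by
          conv_lhs => rw [← X_mul_divX_add (fn m).divX]
          simp [mul_comm]
        rw [this]
        exact dvd_add (Dvd.dvd.mul_right (dvd_neg.mpr hpa) _) h0
      intro hcon
      apply hc0
      rw [heval] at hcon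
      have hsq : (p : ℤ)^2 ∣ (-a) * (fn m).divX.eval (-a) := by
        rw [sq]
        exact mul_dvd_mul (dvd_neg.mpr hpa) hdvd
      exact (dvd_add_right hsq).mp hcon
  obtain ⟨hmon, hdeg, hmap, hc0⟩ := key n hn
  have hEis : (fn n).IsEisensteinAt (Ideal.span {(p : ℤ)}) := by
    refine ⟨?_, ?_, ?_⟩
    · rw [hmon.leadingCoeff, Ideal.mem_span_singleton]
      intro h
      have := Int.eq_one_of_dvd_one (by positivity) h
      have := hp.one_lt
      omega
    · intro i hi
      rw [Ideal.mem_span_singleton]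
      have h1 := congrArg (fun q => q.coeff i) hmap
      simp only [coeff_map, coeff_X_pow] at h1
      rw [hdeg] at hi
      rw [if_neg (by omega)] at h1
      exact (ZMod.intCast_zmod_eq_zero_iff_dvd _ p).mp h1
    · rw [Ideal.span_singleton_pow, Ideal.mem_span_singleton]
      exact hc0
  have hprime : (Ideal.span {(p : ℤ)}).IsPrime :=
    (Ideal.span_singleton_prime (by exact_mod_cast hp0)).mpr
      (Nat.prime_iff_prime_int.mp hp)
  have hirr : Irreducible (fn n) :=
    hEis.irreducible hprime hmon.isPrimitive
      (by rw [hdeg]; exact pow_pos hp.pos n)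
  exact ⟨hEis, (Polynomial.IsPrimitive.Int.irreducible_iff_irreducible_map_cast hmon.isPrimitive).mp hirr⟩
end

section
/- The discriminant of the polynomial x^n - a over a field (or over ℤ) equals (-1)^((n^2-n)/2) · n^n · (-a)^(n-1). -/
open Polynomial Finset

/-- The discriminant of the monic polynomial `X ^ n - C a`, expressed via its roots
`r 0, …, r (n-1)` in a splitting field, equals
`(-1) ^ ((n ^ 2 - n) / 2) * n ^ n * (-a) ^ (n - 1)`. -/
theorem stmt10 (K : Type*) [Field K] (n : ℕ) (hn : 2 ≤ n) (a : K)
    (r : Fin n → K) (hr : (X ^ n - C a : K[X]) = ∏ i, (X - C (r i))) :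
    (∏ i : Fin n, ∏ j ∈ Finset.univ.filter (fun j => i < j), (r i - r j) ^ 2) =
      (-1 : K) ^ ((n ^ 2 - n) / 2) * (n : K) ^ n * (-a) ^ (n - 1) := by
  classical
  have hn0 : n ≠ 0 := by omega
  have key : ∀ k : Fin n, ∏ j ∈ univ.erase k, (r k - r j) = (n : K) * r k ^ (n - 1) := by
    intro k
    have h1 : (X ^ n - C a : K[X]) = (X - C (r k)) * ∏ j ∈ univ.erase k, (X - C (r j)) := by
      rw [hr, ← Finset.mul_prod_erase _ _ (mem_univ k)]
    have h2 := congrArg (fun p => eval (r k) (derivative p)) h1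
    simp [derivative_X_pow, derivative_mul, eval_prod] at h2
    rw [← h2]
  have hneg : ∀ (s : Finset (Fin n)) (f : Fin n → K),
      ∏ i ∈ s, (-f i) = (-1 : K) ^ s.card * ∏ i ∈ s, f i := by
    intro s f
    rw [← Finset.prod_const (-1 : K), ← Finset.prod_mul_distrib]
    exact Finset.prod_congr rfl fun i _ => (neg_one_mul _).symm
  have hprod : ∏ i, r i = (-1 : K) ^ n * (-a) := by
    have h0 := congrArg (eval 0) hr
    simp [eval_prod, zero_pow hn0] at h0
    rw [hneg] at h0
    simp at h0
    rw [h0, ← mul_assoc, ← pow_add, ← two_mul, pow_mul, neg_one_sq, one_pow, one_mul]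
  have hev : Even (n * (n - 1)) := by
    rcases Nat.even_or_odd n with h | h
    · exact h.mul_right _
    · exact (Nat.Odd.sub_odd h odd_one).mul_left _
  have hD : ∏ k, ∏ j ∈ univ.erase k, (r k - r j) = (n : K) ^ n * (-a) ^ (n - 1) := by
    rw [Finset.prod_congr rfl fun k _ => key k, Finset.prod_mul_distrib, Finset.prod_const,
      Finset.prod_pow, hprod, mul_pow, ← pow_mul, Finset.card_univ, Fintype.card_fin,
      Even.neg_one_pow hev, one_mul]
  have hsplit : ∀ k : Fin n, univ.erase k = Ioi k ∪ Iio k := by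
    intro k; ext j
    simp only [Finset.mem_erase, Finset.mem_univ, and_true, Finset.mem_union, Finset.mem_Ioi,
      Finset.mem_Iio]
    constructor
    · intro h; exact h.lt_or_gt.symm
    · rintro (h | h); exacts [h.ne', h.ne]
  -- swap the "lower" part
  have hswap : ∏ k : Fin n, ∏ j ∈ Iio k, (r k - r j) = ∏ i : Fin n, ∏ j ∈ Ioi i, (r j - r i) := by
    rw [Finset.prod_comm' (t' := univ) (s' := fun j => Ioi j) (by simp)]
  have hD2 : ∏ k : Fin n, ∏ j ∈ univ.erase k, (r k - r j)
      = ∏ i : Fin n, ∏ j ∈ Ioi i, (-(r i - r j) ^ 2) := by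
    calc ∏ k : Fin n, ∏ j ∈ univ.erase k, (r k - r j)
        = ∏ k : Fin n, ((∏ j ∈ Ioi k, (r k - r j)) * ∏ j ∈ Iio k, (r k - r j)) := by
          refine Finset.prod_congr rfl fun k _ => ?_
          rw [hsplit k, Finset.prod_union (Finset.disjoint_Ioi_Iio k)]
      _ = (∏ k : Fin n, ∏ j ∈ Ioi k, (r k - r j)) * ∏ k : Fin n, ∏ j ∈ Iio k, (r k - r j) := by
          rw [Finset.prod_mul_distrib]
      _ = ∏ i : Fin n, ∏ j ∈ Ioi i, ((r i - r j) * (r j - r i)) := by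
          rw [hswap, ← Finset.prod_mul_distrib]
          exact Finset.prod_congr rfl fun i _ => (Finset.prod_mul_distrib).symm
      _ = ∏ i : Fin n, ∏ j ∈ Ioi i, (-(r i - r j) ^ 2) := by
          refine Finset.prod_congr rfl fun i _ => Finset.prod_congr rfl fun j _ => by ring
  -- pull out the signs
  have hcard : ∑ i : Fin n, (Ioi i).card = (n ^ 2 - n) / 2 := by
    have h1 : ∀ i : Fin n, (Ioi i).card = n - 1 - (i : ℕ) := fun i => Fin.card_Ioi i
    rw [Finset.sum_congr rfl fun i _ => h1 i, Fin.sum_univ_eq_sum_range,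
      Finset.sum_range_reflect (fun j => j) n]
    simp [Finset.sum_range_id]
    congr 1
    have : n ^ 2 = n * n := sq n
    cases n with
    | zero => simp
    | succ m => rw [this]; simp [Nat.succ_sub_one]; ring_nf; omega
  have hD3 : ∏ i : Fin n, ∏ j ∈ Ioi i, (-(r i - r j) ^ 2)
      = (-1 : K) ^ ((n ^ 2 - n) / 2) *
        ∏ i : Fin n, ∏ j ∈ Ioi i, (r i - r j) ^ 2 := by
    rw [Finset.prod_congr rfl fun i (_ : i ∈ univ) => hneg (Ioi i) (fun j => (r i - r j) ^ 2),
      Finset.prod_mul_distrib, Finset.prod_pow_eq_pow_sum, hcard]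
  -- filter = Ioi
  have hfilt : ∀ i : Fin n, Finset.univ.filter (fun j => i < j) = Ioi i := by
    intro i; ext j; simp
  rw [Finset.prod_congr rfl fun i (_ : i ∈ univ) => by rw [hfilt i]]
  have := hD.symm.trans (hD2.trans hD3)
  -- this : n^n * (-a)^(n-1) = (-1)^M * LHS'
  have h4 := congrArg (fun x => (-1 : K) ^ ((n ^ 2 - n) / 2) * x) this
  simp only [← mul_assoc, ← pow_add, ← two_mul, pow_mul, neg_one_sq, one_pow, one_mul] at h4
  rw [← h4]
end

section
/- Let p be a prime and a an integer such that a^p ≢ a (mod p^2). If p ∤ a, then writing a^p - a = p·u, the integer u is not divisible by p; moreover for every m ≥ 1, a^(p^m) - a = p·u_m with p ∤ u_m. -/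
theorem stmt13 (p : ℕ) (hp : p.Prime) (a : ℤ) (ha : ¬ (p : ℤ) ∣ a)
    (hW : ¬ ((p : ℤ) ^ 2 ∣ a ^ p - a)) (m : ℕ) (hm : 1 ≤ m) :
    (p : ℤ) ∣ a ^ (p ^ m) - a ∧ ¬ ((p : ℤ) ^ 2 ∣ a ^ (p ^ m) - a) := by
  haveI : Fact p.Prime := ⟨hp⟩
  have fermat : ∀ x : ℤ, (p : ℤ) ∣ x ^ p - x := by
    intro x
    have := ZMod.pow_card (x : ZMod p)
    rwa [← Int.cast_pow, ← sub_eq_zero, ← Int.cast_sub,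
      ZMod.intCast_zmod_eq_zero_iff_dvd] at this
  induction m with
  | zero => omega
  | succ n ih =>
    rcases Nat.eq_or_lt_of_le hm with h1 | h1
    · constructor
      · simpa [← h1] using fermat a
      · simpa [← h1] using hW
    · have hn : 1 ≤ n := by omega
      obtain ⟨hd, hnd⟩ := ih hn
      have key : ((p : ℤ) ^ 2) ∣ (a ^ (p ^ n)) ^ p - a ^ p := by
        simpa using dvd_sub_pow_of_dvd_sub hd 1
      have heq : a ^ (p ^ (n + 1)) - a = ((a ^ (p ^ n)) ^ p - a ^ p) + (a ^ p - a) := by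
        rw [pow_succ, pow_mul]; ring
      constructor
      · rw [heq]
        have : (p : ℤ) ∣ (a ^ (p ^ n)) ^ p - a ^ p :=
          (dvd_pow_self (p : ℤ) two_ne_zero).trans key
        exact dvd_add this (fermat a)
      · rw [heq]
        intro hcon
        exact hW (by have := dvd_sub hcon key; simpa using this)
end
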